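/- Rafael's theorem: let S : C → D be a functor with right adjoint T, with unit ζ : 1 → TS and counit ξ : ST → 1. Then S is a separable functor if and only if ζ splits, i.e., there is a natural transformation ζ' : TS → 1 with ζ'_C ∘ ζ_C = id_C for all C. Dually, T is separable if and only if ξ cosplits, i.e., there is ξ' : 1 → ST with ξ_D ∘ ξ'_D = id_D for all D. -/
import Mathlib


open CategoryTheory

universe v₁ v₂ u₁ u₂

/-- A functor `F : C ⥤ D` is *separable* if for all objects `X, Y` there are
maps `Φ : Hom_D(F X, F Y) → Hom_C(X, Y)` such that (SF1) `Φ (F.map f) = f` for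
every morphism `f`, and (SF2) for every commutative square
`h ≫ F.map g = F.map f ≫ h'` in `D` one has `Φ h ≫ g = f ≫ Φ h'`. -/
def CategoryTheory.Functor.Separable {C : Type u₁} {D : Type u₂}
    [Category.{v₁} C] [Category.{v₂} D] (F : C ⥤ D) : Prop :=
  ∃ Φ : ∀ ⦃X Y : C⦄, (F.obj X ⟶ F.obj Y) → (X ⟶ Y),
    (∀ ⦃X Y : C⦄ (f : X ⟶ Y), Φ (F.map f) = f) ∧
    (∀ ⦃X₁ X₁' X₂ X₂' : C⦄ (f : X₁ ⟶ X₁') (g : X₂ ⟶ X₂')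
      (h : F.obj X₁ ⟶ F.obj X₂) (h' : F.obj X₁' ⟶ F.obj X₂'),
      h ≫ F.map g = F.map f ≫ h' → Φ h ≫ g = f ≫ Φ h')

/-- **Rafael's theorem.**  Let `S ⊣ T` be an adjunction with unit `ζ` and
counit `ξ`.  Then `S` is separable if and only if the unit splits (there is a
natural transformation `ζ' : TS ⟶ 1` with `ζ' ∘ ζ = id`), and `T` is separable
if and only if the counit cosplits (there is `ξ' : 1 ⟶ ST` with
`ξ ∘ ξ' = id`). -/
theorem rafael_separability
    {C : Type u₁} {D : Type u₂} [Category.{v₁} C] [Category.{v₂} D]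
    (S : C ⥤ D) (T : D ⥤ C) (adj : S ⊣ T) :
    (S.Separable ↔ ∃ ζ' : (S ⋙ T) ⟶ 𝟭 C,
        ∀ X : C, adj.unit.app X ≫ ζ'.app X = 𝟙 X) ∧
    (T.Separable ↔ ∃ ξ' : 𝟭 D ⟶ (T ⋙ S),
        ∀ Y : D, ξ'.app Y ≫ adj.counit.app Y = 𝟙 Y) := by
  constructor
  · constructor
    · rintro ⟨Φ, hΦ1, hΦ2⟩
      refine ⟨⟨fun X => Φ (adj.counit.app (S.obj X)), ?_⟩, ?_⟩
      · intro X Y f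
        have := hΦ2 ((S ⋙ T).map f) f (adj.counit.app (S.obj X))
          (adj.counit.app (S.obj Y)) (by simpa using (adj.counit.naturality (S.map f)).symm)
        simpa using this.symm
      · intro X
        have h := hΦ2 (adj.unit.app X) (𝟙 X) (𝟙 (S.obj X)) (adj.counit.app (S.obj X))
          (by simp)
        have h1 : Φ (𝟙 (S.obj X)) = 𝟙 X := by simpa using hΦ1 (𝟙 X)
        simp only [Category.comp_id] at h
        simp [← h, h1]
    · rintro ⟨ζ', hζ⟩
      refine ⟨fun X Y h => adj.unit.app X ≫ T.map h ≫ ζ'.app Y, ?_, ?_⟩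
      · intro X Y f
        have := adj.unit.naturality f
        have hn : adj.unit.app X ≫ T.map (S.map f) = f ≫ adj.unit.app Y := by
          simpa using this.symm
        dsimp only
        rw [reassoc_of% hn, hζ, Category.comp_id]
      · intro X₁ X₁' X₂ X₂' f g h h' hsq
        have hn : ζ'.app X₂ ≫ g = T.map (S.map g) ≫ ζ'.app X₂' := by
          simpa using (ζ'.naturality g).symm
        have hu : adj.unit.app X₁ ≫ T.map (S.map f) = f ≫ adj.unit.app X₁' := by
          simpa using (adj.unit.naturality f).symm
        calc (adj.unit.app X₁ ≫ T.map h ≫ ζ'.app X₂) ≫ g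
            = adj.unit.app X₁ ≫ T.map h ≫ T.map (S.map g) ≫ ζ'.app X₂' := by
              simp [hn]
          _ = adj.unit.app X₁ ≫ T.map (h ≫ S.map g) ≫ ζ'.app X₂' := by
              simp
          _ = adj.unit.app X₁ ≫ T.map (S.map f) ≫ T.map h' ≫ ζ'.app X₂' := by
              rw [hsq]; simp
          _ = f ≫ adj.unit.app X₁' ≫ T.map h' ≫ ζ'.app X₂' := by
              rw [reassoc_of% hu]
  · constructor
    · rintro ⟨Φ, hΦ1, hΦ2⟩
      refine ⟨⟨fun Y => Φ (adj.unit.app (T.obj Y)), ?_⟩, ?_⟩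
      · intro X Y g
        have := hΦ2 g ((T ⋙ S).map g) (adj.unit.app (T.obj X))
          (adj.unit.app (T.obj Y)) (by simpa using (adj.unit.naturality (T.map g)))
        simpa using this.symm
      · intro Y
        have h := hΦ2 (𝟙 Y) (adj.counit.app Y) (adj.unit.app (T.obj Y)) (𝟙 (T.obj Y))
          (by simp)
        have h1 : Φ (𝟙 (T.obj Y)) = 𝟙 Y := by simpa using hΦ1 (𝟙 Y)
        simpa [h1] using h
    · rintro ⟨ξ', hξ⟩
      refine ⟨fun X Y h => ξ'.app X ≫ S.map h ≫ adj.counit.app Y, ?_, ?_⟩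
      · intro X Y g
        have hn : ξ'.app X ≫ S.map (T.map g) = g ≫ ξ'.app Y := by
          simpa using (ξ'.naturality g).symm
        dsimp only
        rw [reassoc_of% hn, hξ, Category.comp_id]
      · intro X₁ X₁' X₂ X₂' f g h h' hsq
        have hn : adj.counit.app X₂ ≫ g = S.map (T.map g) ≫ adj.counit.app X₂' := by
          simpa using (adj.counit.naturality g).symm
        have hu : ξ'.app X₁ ≫ S.map (T.map f) = f ≫ ξ'.app X₁' := by
          simpa using (ξ'.naturality f).symm
        calc (ξ'.app X₁ ≫ S.map h ≫ adj.counit.app X₂) ≫ g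
            = ξ'.app X₁ ≫ S.map h ≫ S.map (T.map g) ≫ adj.counit.app X₂' := by
              simp only [Category.assoc, hn]
          _ = ξ'.app X₁ ≫ S.map (h ≫ T.map g) ≫ adj.counit.app X₂' := by simp
          _ = ξ'.app X₁ ≫ S.map (T.map f) ≫ S.map h' ≫ adj.counit.app X₂' := by
              rw [hsq]; simp
          _ = f ≫ ξ'.app X₁' ≫ S.map h' ≫ adj.counit.app X₂' := by
              rw [reassoc_of% hu]
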